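/- arXiv:2505.15319 — 2 statements merged into one kernel-verified Lean document; each statement's English description precedes it below -/
import Mathlib

section
/- Suppose M : (0,1] → ℝ is integrable with M ≥ 0, and satisfies for all μ ∈ (0,1]: M(μ) = 1 + 2U·M(μ)·μ·log(1+1/μ) + (ω₀/2)·μ·M(μ)·∫₀¹ M(μ')/(μ+μ') dμ', with 0 ≤ ω₀ and 0 ≤ U. Define R = 1 + 2U·∫₀¹ M(μ)·μ·log(1+1/μ) dμ and A₀ = ∫₀¹ M(μ) dμ. Then (ω₀/4)·A₀² − A₀ + R = 0. -/
open MeasureTheory Set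

noncomputable def nuM : Measure ℝ := MeasureTheory.volume.restrict (Set.Ioc 0 1)

lemma nuM_univ : nuM Set.univ = 1 := by
  simp [nuM, Real.volume_Ioc]

instance : IsFiniteMeasure nuM := ⟨by rw [nuM_univ]; exact ENNReal.one_lt_top⟩

lemma nuM_ae_mem : ∀ᵐ x ∂nuM, x ∈ Set.Ioc (0:ℝ) 1 := ae_restrict_mem measurableSet_Ioc

lemma inner_integrable {M : ℝ → ℝ} (hM : MeasureTheory.Integrable M nuM) {x : ℝ} (hx : 0 < x) :
    MeasureTheory.Integrable (fun y => M y / (x + y)) nuM := by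
  have hb : MeasureTheory.Integrable (fun y => (1/x) * |M y|) nuM :=
    hM.abs.const_mul (1/x)
  have hsm : AEStronglyMeasurable (fun y => M y / (x + y)) nuM :=
    (hM.1.aemeasurable.div ((measurable_const.add measurable_id).aemeasurable)).aestronglyMeasurable
  refine hb.mono' hsm ?_
  filter_upwards [nuM_ae_mem] with y hy
  have hy0 : 0 < y := hy.1
  have hxy : 0 < x + y := by linarith
  rw [norm_div, Real.norm_eq_abs, Real.norm_eq_abs, abs_of_pos hxy]
  rw [div_le_iff₀ hxy, one_div, mul_comm (x⁻¹), mul_assoc]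
  have h1 : (1:ℝ) ≤ x⁻¹ * (x + y) := by
    rw [← inv_mul_cancel₀ (ne_of_gt hx)]
    exact mul_le_mul_of_nonneg_left (by linarith) (by positivity)
  nlinarith [abs_nonneg (M y)]

lemma ae_prod_mem : ∀ᵐ p ∂(nuM.prod nuM),
    p.1 ∈ Set.Ioc (0:ℝ) 1 ∧ p.2 ∈ Set.Ioc (0:ℝ) 1 := by
  have h : nuM.prod nuM
      = (MeasureTheory.volume.prod MeasureTheory.volume).restrict
          ((Set.Ioc (0:ℝ) 1) ×ˢ (Set.Ioc (0:ℝ) 1)) := by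
    rw [nuM, Measure.prod_restrict]
  rw [h]
  filter_upwards [ae_restrict_mem (measurableSet_Ioc.prod measurableSet_Ioc)] with p hp
  exact ⟨hp.1, hp.2⟩

lemma symm_key {N : ℝ → ℝ} (hNm : Measurable N) (hNpos : ∀ x, 0 ≤ N x)
    (hN : MeasureTheory.Integrable N nuM)
    (hg : MeasureTheory.Integrable (fun x => x * N x * ∫ y, N y / (x + y) ∂nuM) nuM) :
    ∫ x, x * N x * ∫ y, N y / (x + y) ∂nuM ∂nuM = (∫ x, N x ∂nuM)^2 / 2 := by
  set A : ℝ := ∫ x, N x ∂nuM with hAdef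
  have hA0 : 0 ≤ A := integral_nonneg (fun x => hNpos x)
  set Fl : ℝ × ℝ → ENNReal :=
    fun p => ENNReal.ofReal (p.1 * N p.1 * N p.2 / (p.1 + p.2)) with hFldef
  have hFlm : Measurable Fl := by
    apply Measurable.ennreal_ofReal
    exact ((measurable_fst.mul (hNm.comp measurable_fst)).mul
      (hNm.comp measurable_snd)).div (measurable_fst.add measurable_snd)
  set J : ENNReal := ∫⁻ p, Fl p ∂(nuM.prod nuM) with hJdef
  -- step 2 : swap invariance
  have hswap : ∫⁻ p, Fl p.swap ∂(nuM.prod nuM) = J := lintegral_prod_swap Fl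
  -- step 3 : J + J = ofReal (A^2)
  have hsum : J + J = ENNReal.ofReal (A^2) := by
    have h1 : ∫⁻ p, (Fl p + Fl p.swap) ∂(nuM.prod nuM) = J + J := by
      rw [lintegral_add_left hFlm, hswap]
    have h2 : ∫⁻ p, (Fl p + Fl p.swap) ∂(nuM.prod nuM)
        = ∫⁻ p, (ENNReal.ofReal (N p.1) * ENNReal.ofReal (N p.2)) ∂(nuM.prod nuM) := by
      apply lintegral_congr_ae
      filter_upwards [ae_prod_mem] with p hp
      obtain ⟨⟨hx0, _⟩, ⟨hy0, _⟩⟩ := hp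
      have hxy : (0:ℝ) < p.1 + p.2 := by linarith
      have hxy' : (0:ℝ) < p.2 + p.1 := by linarith
      have ha : 0 ≤ p.1 * N p.1 * N p.2 / (p.1 + p.2) :=
        div_nonneg (mul_nonneg (mul_nonneg hx0.le (hNpos _)) (hNpos _)) hxy.le
      have hb : 0 ≤ p.2 * N p.2 * N p.1 / (p.2 + p.1) :=
        div_nonneg (mul_nonneg (mul_nonneg hy0.le (hNpos _)) (hNpos _)) hxy'.le
      simp only [hFldef, Prod.fst_swap, Prod.snd_swap]
      rw [← ENNReal.ofReal_add ha hb, ← ENNReal.ofReal_mul (hNpos p.1)]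
      congr 1
      field_simp
      ring
    have h3 : ∫⁻ p, (ENNReal.ofReal (N p.1) * ENNReal.ofReal (N p.2)) ∂(nuM.prod nuM)
        = ENNReal.ofReal (A^2) := by
      rw [lintegral_prod_mul (hNm.ennreal_ofReal.aemeasurable) (hNm.ennreal_ofReal.aemeasurable)]
      rw [← ofReal_integral_eq_lintegral_ofReal hN (Filter.Eventually.of_forall hNpos)]
      rw [← ENNReal.ofReal_mul hA0, ← hAdef, sq]
    rw [← h1, h2, h3]
  -- step 4/5 : J = ofReal (∫ g)
  have hg0ae : 0 ≤ᵐ[nuM] fun x => x * N x * ∫ y, N y / (x + y) ∂nuM := by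
    filter_upwards [nuM_ae_mem] with x hx
    have hinner : 0 ≤ ∫ y, N y / (x + y) ∂nuM := by
      apply integral_nonneg_of_ae
      filter_upwards [nuM_ae_mem] with y hy
      have hxy : (0:ℝ) < x + y := by have := hx.1; have := hy.1; linarith
      exact div_nonneg (hNpos y) hxy.le
    exact mul_nonneg (mul_nonneg hx.1.le (hNpos x)) hinner
  have hJg : J = ENNReal.ofReal (∫ x, x * N x * ∫ y, N y / (x + y) ∂nuM ∂nuM) := by
    rw [hJdef, lintegral_prod Fl hFlm.aemeasurable]
    rw [ofReal_integral_eq_lintegral_ofReal hg hg0ae]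
    apply lintegral_congr_ae
    filter_upwards [nuM_ae_mem] with x hx
    have hx0 : (0:ℝ) < x := hx.1
    have hinner : MeasureTheory.Integrable (fun y => (x * N x) * (N y / (x + y))) nuM :=
      (inner_integrable hN hx0).const_mul (x * N x)
    have hnn : 0 ≤ᵐ[nuM] fun y => (x * N x) * (N y / (x + y)) := by
      filter_upwards [nuM_ae_mem] with y hy
      have hxy : (0:ℝ) < x + y := by have := hy.1; linarith
      exact mul_nonneg (mul_nonneg hx0.le (hNpos x)) (div_nonneg (hNpos y) hxy.le)
    have heq : ∫⁻ y, Fl (x, y) ∂nuM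
        = ∫⁻ y, ENNReal.ofReal ((x * N x) * (N y / (x + y))) ∂nuM := by
      apply lintegral_congr
      intro y
      simp only [hFldef]
      rw [mul_div_assoc]
    rw [heq, ← ofReal_integral_eq_lintegral_ofReal hinner hnn]
    congr 1
    rw [MeasureTheory.integral_const_mul (x * N x) (fun y => N y / (x + y))]
  -- conclude
  have hg0 : 0 ≤ ∫ x, x * N x * ∫ y, N y / (x + y) ∂nuM ∂nuM :=
    integral_nonneg_of_ae hg0ae
  set G : ℝ := ∫ x, x * N x * ∫ y, N y / (x + y) ∂nuM ∂nuM with hGdef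
  have hGG : ENNReal.ofReal (G + G) = ENNReal.ofReal (A^2) := by
    rw [ENNReal.ofReal_add hg0 hg0, ← hJg]
    exact hsum
  have hfin : G + G = A^2 :=
    (ENNReal.ofReal_eq_ofReal_iff (by linarith) (sq_nonneg A)).mp hGG
  linarith

theorem M_zeroth_moment_quadratic (U ω₀ : ℝ) (hU : 0 ≤ U) (hω : 0 ≤ ω₀)
    (M : ℝ → ℝ) (hMint : MeasureTheory.IntegrableOn M (Set.Ioc 0 1))
    (hMpos : ∀ μ ∈ Set.Ioc (0:ℝ) 1, 0 ≤ M μ)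
    (hMeq : ∀ μ ∈ Set.Ioc (0:ℝ) 1,
      M μ = 1 + 2 * U * M μ * μ * Real.log (1 + 1/μ)
        + (ω₀/2) * μ * M μ * ∫ μ' in (0:ℝ)..1, M μ' / (μ + μ'))
    (R A₀ : ℝ)
    (hR : R = 1 + 2 * U * ∫ μ in (0:ℝ)..1, M μ * μ * Real.log (1 + 1/μ))
    (hA : A₀ = ∫ μ in (0:ℝ)..1, M μ) :
    (ω₀/4) * A₀^2 - A₀ + R = 0 := by
  have hIoc : ∀ f : ℝ → ℝ, (∫ μ in (0:ℝ)..1, f μ) = ∫ μ, f μ ∂nuM := by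
    intro f; rw [intervalIntegral.integral_of_le zero_le_one]; rfl
  have hMν : MeasureTheory.Integrable M nuM := hMint
  have hRn : R = 1 + 2*U * ∫ μ, M μ * μ * Real.log (1+1/μ) ∂nuM := by rw [hR, hIoc]
  have hAn : A₀ = ∫ μ, M μ ∂nuM := by rw [hA, hIoc]
  have hwb : ∀ μ ∈ Set.Ioc (0:ℝ) 1,
      0 ≤ μ * Real.log (1+1/μ) ∧ μ * Real.log (1+1/μ) ≤ 1 := by
    intro μ hμ
    have h0 : 0 < μ := hμ.1
    have hinv : 0 < 1/μ := by positivity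
    have hlog0 : 0 ≤ Real.log (1+1/μ) := Real.log_nonneg (by linarith)
    refine ⟨mul_nonneg h0.le hlog0, ?_⟩
    have hle : Real.log (1+1/μ) ≤ 1/μ := by
      have := Real.log_le_sub_one_of_pos (show (0:ℝ) < 1+1/μ by linarith)
      linarith
    calc μ * Real.log (1+1/μ) ≤ μ * (1/μ) := mul_le_mul_of_nonneg_left hle h0.le
    _ = 1 := by field_simp
  have hL : MeasureTheory.Integrable (fun μ => M μ * μ * Real.log (1+1/μ)) nuM := by
    have hsm : AEStronglyMeasurable (fun μ => M μ * μ * Real.log (1+1/μ)) nuM := by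
      apply AEMeasurable.aestronglyMeasurable
      exact (hMν.1.aemeasurable.mul aemeasurable_id).mul
        ((measurable_const.add (measurable_const.div measurable_id)).log).aemeasurable
    refine hMν.abs.mono' hsm ?_
    filter_upwards [nuM_ae_mem] with μ hμ
    obtain ⟨hw0, hw1⟩ := hwb μ hμ
    rw [Real.norm_eq_abs, mul_assoc, abs_mul, abs_of_nonneg hw0]
    calc |M μ| * (μ * Real.log (1+1/μ)) ≤ |M μ| * 1 :=
          mul_le_mul_of_nonneg_left hw1 (abs_nonneg _)
    _ = |M μ| := mul_one _
  have hone : MeasureTheory.Integrable (fun _ : ℝ => (1:ℝ)) nuM := integrable_const 1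
  have hint1 : ∫ _, (1:ℝ) ∂nuM = 1 := by
    rw [integral_const, measureReal_def, nuM_univ]; simp
  rcases eq_or_lt_of_le hω with hω0 | hωpos
  · -- ω₀ = 0 case
    have hMe : ∀ᵐ μ ∂nuM, M μ = 1 + 2*U * (M μ * μ * Real.log (1+1/μ)) := by
      filter_upwards [nuM_ae_mem] with μ hμ
      have h := hMeq μ hμ
      rw [← hω0] at h
      linarith [h]
    have hAR : ∫ μ, M μ ∂nuM = ∫ μ, (1 + 2*U * (M μ * μ * Real.log (1+1/μ))) ∂nuM :=
      integral_congr_ae hMe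
    rw [integral_add hone (hL.const_mul (2*U)), hint1,
      MeasureTheory.integral_const_mul] at hAR
    rw [← hω0]
    have : A₀ = R := by rw [hAn, hRn, hAR]
    rw [this]; ring
  · -- ω₀ > 0 case
    have hωne : ω₀ ≠ 0 := hωpos.ne'
    have hIeq : ∀ μ : ℝ, (∫ μ' in (0:ℝ)..1, M μ' / (μ + μ')) = ∫ y, M y / (μ + y) ∂nuM :=
      fun μ => hIoc _
    have hhInt : MeasureTheory.Integrable
        (fun μ => M μ - 1 - 2*U*(M μ * μ * Real.log (1+1/μ))) nuM :=
      (hMν.sub hone).sub (hL.const_mul (2*U))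
    have hgae : (fun μ => (2/ω₀) * (M μ - 1 - 2*U*(M μ * μ * Real.log (1+1/μ))))
        =ᵐ[nuM] (fun x => x * M x * ∫ y, M y / (x + y) ∂nuM) := by
      filter_upwards [nuM_ae_mem] with μ hμ
      have he := hMeq μ hμ
      rw [hIeq μ] at he
      have key : M μ - 1 - 2*U*(M μ * μ * Real.log (1+1/μ))
          = (ω₀/2) * μ * M μ * ∫ y, M y / (μ + y) ∂nuM := by linarith
      rw [key]
      field_simp
    have hgM : MeasureTheory.Integrable (fun x => x * M x * ∫ y, M y / (x + y) ∂nuM) nuM :=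
      (hhInt.const_mul (2/ω₀)).congr hgae
    have hsub1 : MeasureTheory.Integrable (fun μ => M μ - 1) nuM := hMν.sub hone
    have hintg : ∫ x, x * M x * ∫ y, M y / (x + y) ∂nuM ∂nuM = (2/ω₀) * (A₀ - R) := by
      have e1 : ∫ μ, (M μ - 1 - 2*U*(M μ * μ * Real.log (1+1/μ))) ∂nuM
          = (∫ μ, (M μ - 1) ∂nuM) - 2*U * ∫ μ, M μ * μ * Real.log (1+1/μ) ∂nuM := by
        rw [integral_sub hsub1 (hL.const_mul (2*U)), MeasureTheory.integral_const_mul]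
      have e2 : ∫ μ, (M μ - 1) ∂nuM = A₀ - 1 := by
        rw [integral_sub hMν hone, hint1, hAn]
      rw [← integral_congr_ae hgae, MeasureTheory.integral_const_mul, e1, e2, hRn]
      ring
    -- measurable nonnegative representative
    have hsm := hMν.1
    set N : ℝ → ℝ := fun x => max (hsm.mk M x) 0 with hNdef
    have hNm : Measurable N := hsm.stronglyMeasurable_mk.measurable.max measurable_const
    have hNpos : ∀ x, 0 ≤ N x := fun x => le_max_right _ _
    have hMN : M =ᵐ[nuM] N := by
      filter_upwards [hsm.ae_eq_mk, nuM_ae_mem] with x h1 h2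
      rw [hNdef]
      simp only [← h1]
      exact (max_eq_left (hMpos x h2)).symm
    have hNν : MeasureTheory.Integrable N nuM := hMν.congr hMN
    have hNA : ∫ x, N x ∂nuM = A₀ := by rw [← integral_congr_ae hMN, ← hAn]
    have hIN : ∀ x : ℝ, (∫ y, M y / (x + y) ∂nuM) = ∫ y, N y / (x + y) ∂nuM :=
      fun x => integral_congr_ae (hMN.mono fun y hy => by simp only [hy])
    have hgMN : (fun x => x * M x * ∫ y, M y / (x + y) ∂nuM)
        =ᵐ[nuM] (fun x => x * N x * ∫ y, N y / (x + y) ∂nuM) := by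
      filter_upwards [hMN] with x hx
      rw [hx, hIN x]
    have hgN : MeasureTheory.Integrable (fun x => x * N x * ∫ y, N y / (x + y) ∂nuM) nuM :=
      hgM.congr hgMN
    have hsymm := symm_key hNm hNpos hNν hgN
    rw [hNA] at hsymm
    rw [← integral_congr_ae hgMN, hintg] at hsymm
    have hfinal : 2 * (A₀ - R) = ω₀ * (A₀^2 / 2) := by
      field_simp at hsymm
      linarith
    field_simp
    linarith
end

section
/- Suppose M : (0,1] → ℝ satisfies the M-function equation M(μ) = 1 + 2U·M(μ)·μ·log(1+1/μ) + (ω₀/2)·μ·M(μ)·∫₀¹ M(μ')/(μ+μ') dμ' with M integrable, and let s = √(1 − ω₀R) where R = 1 + 2U·∫₀¹ M(μ')μ' log(1+1/μ') dμ' and (ω₀/2)∫₀¹ M = 1 − s. Then for every μ ∈ (0,1] with M(μ) ≠ 0: 1/M(μ) = (ω₀/2)·∫₀¹ (μ'/(μ+μ'))·M(μ') dμ' + s − 2U·μ·log(1+1/μ). -/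
set_option maxHeartbeats 1000000

open MeasureTheory

theorem alternative_integral_equation (U ω₀ : ℝ) (M : ℝ → ℝ)
    (hMint : MeasureTheory.IntegrableOn M (Set.Ioc 0 1))
    (hMeq : ∀ μ ∈ Set.Ioc (0:ℝ) 1,
      M μ = 1 + 2 * U * M μ * μ * Real.log (1 + 1/μ)
        + (ω₀/2) * μ * M μ * ∫ μ' in (0:ℝ)..1, M μ' / (μ + μ'))
    (R s : ℝ)
    (hR : R = 1 + 2 * U * ∫ μ' in (0:ℝ)..1, M μ' * μ' * Real.log (1 + 1/μ'))
    (hs : s = Real.sqrt (1 - ω₀ * R))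
    (hmom : (ω₀/2) * ∫ μ in (0:ℝ)..1, M μ = 1 - s) :
    ∀ μ ∈ Set.Ioc (0:ℝ) 1, M μ ≠ 0 →
      1 / M μ = (ω₀/2) * (∫ μ' in (0:ℝ)..1, (μ' / (μ + μ')) * M μ')
        + s - 2 * U * μ * Real.log (1 + 1/μ) := by
  intro μ hμ hM0
  have hμ0 : 0 < μ := hμ.1
  have heq := hMeq μ hμ
  set I := ∫ μ' in (0:ℝ)..1, M μ' / (μ + μ') with hIdef
  set L := Real.log (1 + 1/μ) with hLdef
  have hinv : 1 / M μ = 1 - 2*U*μ*L - (ω₀/2)*μ*I := by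
    have h1 : M μ * (1 - 2*U*μ*L - (ω₀/2)*μ*I) = 1 := by linear_combination heq
    field_simp
    linarith
  -- integrability of M μ' / (μ + μ') on Ioc 0 1
  have hint1 : MeasureTheory.IntegrableOn (fun μ' => M μ' / (μ + μ')) (Set.Ioc 0 1) := by
    have hg : MeasureTheory.IntegrableOn (fun x => ‖M x‖ * μ⁻¹) (Set.Ioc 0 1) :=
      hMint.norm.mul_const μ⁻¹
    have hmeas : MeasureTheory.AEStronglyMeasurable (fun μ' => M μ' / (μ + μ'))
        (MeasureTheory.volume.restrict (Set.Ioc 0 1)) :=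
      (hMint.aemeasurable.div
        ((measurable_const.add measurable_id).aemeasurable)).aestronglyMeasurable
    refine MeasureTheory.Integrable.mono' hg hmeas ?_
    filter_upwards [MeasureTheory.ae_restrict_mem measurableSet_Ioc] with x hx
    have hx0 : 0 < x := hx.1
    have hpos : 0 < μ + x := by linarith
    rw [Real.norm_eq_abs, abs_div, abs_of_pos hpos]
    rw [div_le_iff₀ hpos]
    calc |M x| = ‖M x‖ * μ⁻¹ * μ := by
            field_simp
            exact (Real.norm_eq_abs _).symm
      _ ≤ ‖M x‖ * μ⁻¹ * (μ + x) := by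
            apply mul_le_mul_of_nonneg_left (by linarith)
            positivity
  have hsplit : (∫ μ' in (0:ℝ)..1, (μ' / (μ + μ')) * M μ')
      = (∫ μ' in (0:ℝ)..1, M μ') - μ * I := by
    rw [hIdef, intervalIntegral.integral_of_le zero_le_one,
      intervalIntegral.integral_of_le zero_le_one,
      intervalIntegral.integral_of_le zero_le_one]
    have hcongr : (∫ μ' in Set.Ioc (0:ℝ) 1, (μ' / (μ + μ')) * M μ')
        = ∫ μ' in Set.Ioc (0:ℝ) 1, (M μ' - μ * (M μ' / (μ + μ'))) := by
      apply MeasureTheory.setIntegral_congr_fun measurableSet_Ioc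
      intro x hx
      have hpos : 0 < μ + x := by linarith [hx.1]
      field_simp
      ring
    rw [hcongr, MeasureTheory.integral_sub hMint (hint1.const_mul μ),
      MeasureTheory.integral_const_mul]
  rw [hsplit]
  linear_combination hinv - hmom
end
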